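/- Under the same hypotheses (symmetric A₀ with anisotropic bounds, B = I + δ^{α-1}B_g, |Dg| ≤ L, δ^{α-1}η ≤ K₀ν, 0 < ν < η < 1), there is C = C(Λ, L, K₀) such that for all ξ ∈ ℝ³: ⟨A₀B*ξ, B*ξ⟩ ≤ C(η|ξ'|² + ν|ξ₃|²). -/

import Mathlib

set_option maxHeartbeats 1000000


open Matrix Real

private lemma aux_alg (η ν s b a d Lg L K₀ : ℝ)
    (hν : 0 < ν) (hνη : ν ≤ η) (hs0 : 0 ≤ s) (hb0 : 0 ≤ b) (ha0 : 0 ≤ a)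
    (hLg0 : 0 ≤ Lg) (hd0 : 0 < d) (hd1 : d ≤ 1) (hLgL : Lg ≤ L)
    (hK : 0 < K₀) (hdη : d * η ≤ K₀ * ν) (hab : a ≤ s + d * b * Lg) :
    η * a * a + ν * (b * a + b * a + b * b)
      ≤ (2 * L ^ 2 * (K₀ + 1) + 6) * (η * s ^ 2 + ν * b ^ 2) := by
  have hη0 : 0 ≤ η := le_trans hν.le hνη
  have hL0 : 0 ≤ L := le_trans hLg0 hLgL
  have hsq : a ^ 2 ≤ 2 * s ^ 2 + 2 * d ^ 2 * Lg ^ 2 * b ^ 2 := by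
    have h1 := mul_self_le_mul_self ha0 hab
    have h2 := sq_nonneg (s - d * b * Lg)
    nlinarith [h1, h2]
  have hLg2 : Lg ^ 2 ≤ L ^ 2 := by
    have := mul_self_le_mul_self hLg0 hLgL
    nlinarith [this]
  have hdd : d ^ 2 ≤ d := by
    have := mul_le_mul_of_nonneg_left hd1 hd0.le
    nlinarith [this]
  have hA : η * d ^ 2 ≤ K₀ * ν := by
    have h1 := mul_le_mul_of_nonneg_left hdd hη0
    nlinarith [h1, hdη]
  have hAν : ν * d ^ 2 ≤ ν := by
    have h1 := mul_le_mul_of_nonneg_left (hdd.trans hd1) hν.le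
    nlinarith [h1]
  have hB : Lg ^ 2 * b ^ 2 ≤ L ^ 2 * b ^ 2 :=
    mul_le_mul_of_nonneg_right hLg2 (sq_nonneg b)
  have hprod1 : (η * d ^ 2) * (Lg ^ 2 * b ^ 2) ≤ (K₀ * ν) * (L ^ 2 * b ^ 2) :=
    mul_le_mul hA hB (by positivity) (by positivity)
  have hprod2 : (ν * d ^ 2) * (Lg ^ 2 * b ^ 2) ≤ ν * (L ^ 2 * b ^ 2) :=
    mul_le_mul hAν hB (by positivity) (by positivity)
  have F1 : η * a ^ 2 ≤ 2 * (η * s ^ 2) + 2 * ((K₀ * ν) * (L ^ 2 * b ^ 2)) := by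
    have h1 := mul_le_mul_of_nonneg_left hsq hη0
    nlinarith [h1, hprod1]
  have F2 : ν * a ^ 2 ≤ 2 * (η * s ^ 2) + 2 * (ν * (L ^ 2 * b ^ 2)) := by
    have h1 := mul_le_mul_of_nonneg_left hsq hν.le
    have h2 := mul_le_mul_of_nonneg_right hνη (sq_nonneg s)
    nlinarith [h1, h2, hprod2]
  have F3 : 0 ≤ ν * (a - b) ^ 2 := mul_nonneg hν.le (sq_nonneg _)
  have p1 : 0 ≤ L ^ 2 * (K₀ * (η * s ^ 2)) := by positivity
  have p2 : 0 ≤ L ^ 2 * (η * s ^ 2) := by positivity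
  have p3 : 0 ≤ η * s ^ 2 := by positivity
  have p4 : 0 ≤ ν * b ^ 2 := by positivity
  have p5 : 0 ≤ L ^ 2 * (K₀ * (ν * b ^ 2)) := by positivity
  have p6 : 0 ≤ L ^ 2 * (ν * b ^ 2) := by positivity
  nlinarith [F1, F2, F3, p1, p2, p3, p4, p5, p6]

/-- Anisotropic upper bound for `⟨A₀ B* ξ, B* ξ⟩` (Proposition 2.1 (a), upper bound):
there is `C = C(Λ, L, K₀)` such that `⟨A₀B*ξ, B*ξ⟩ ≤ C(η|ξ'|² + ν|ξ₃|²)` for all `ξ`. -/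
theorem stmt_3 (Λ L K₀ : ℝ) (hΛ : Λ ∈ Set.Ioo (0:ℝ) 1) (hL : 0 ≤ L) (hK : 0 < K₀) :
    ∃ C > 0, ∀ (η ν δ α : ℝ) (A₀ : Matrix (Fin 3) (Fin 3) ℝ) (g1 g2 : ℝ),
      0 < ν → ν < η → η < 1 → 0 < δ → δ < 1 → 1 < α →
      A₀.IsSymm →
      Real.sqrt (g1 ^ 2 + g2 ^ 2) ≤ L →
      δ ^ (α - 1) * η ≤ K₀ * ν →
      (∀ ξ : Fin 3 → ℝ,
        Λ * (η * ((ξ 0) ^ 2 + (ξ 1) ^ 2) + ν * (ξ 2) ^ 2) ≤ A₀.mulVec ξ ⬝ᵥ ξ) →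
      (∀ ξ ζ : Fin 3 → ℝ,
        |A₀.mulVec ξ ⬝ᵥ ζ| ≤ Λ⁻¹ *
          (η * Real.sqrt ((ξ 0) ^ 2 + (ξ 1) ^ 2) * Real.sqrt ((ζ 0) ^ 2 + (ζ 1) ^ 2)
            + ν * (|ξ 2| * Real.sqrt ((ζ 0) ^ 2 + (ζ 1) ^ 2)
                + |ζ 2| * Real.sqrt ((ξ 0) ^ 2 + (ξ 1) ^ 2) + |ξ 2| * |ζ 2|))) →
      ∀ ξ : Fin 3 → ℝ,
        A₀.mulVec (ξ + (δ ^ (α - 1) * ξ 2) • ![-g1, -g2, 0]) ⬝ᵥ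
            (ξ + (δ ^ (α - 1) * ξ 2) • ![-g1, -g2, 0])
          ≤ C * (η * ((ξ 0) ^ 2 + (ξ 1) ^ 2) + ν * (ξ 2) ^ 2) := by
  obtain ⟨hΛ0, hΛ1⟩ := hΛ
  have hΛinv : (0:ℝ) < Λ⁻¹ := inv_pos.mpr hΛ0
  refine ⟨Λ⁻¹ * (2 * L ^ 2 * (K₀ + 1) + 6), by positivity, ?_⟩
  intro η ν δ α A₀ g1 g2 hν hνη hη1 hδ0 hδ1 hα hsymm hLg hdη hlow hupp ξ
  set t : ℝ := δ ^ (α - 1) * ξ 2 with ht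
  set ζ : Fin 3 → ℝ := ξ + t • ![-g1, -g2, 0] with hζ
  have hζ0 : ζ 0 = ξ 0 - t * g1 := by
    simp only [hζ, Pi.add_apply, Pi.smul_apply, Matrix.cons_val_zero, smul_eq_mul]; ring
  have hζ1 : ζ 1 = ξ 1 - t * g2 := by
    simp only [hζ, Pi.add_apply, Pi.smul_apply, Matrix.cons_val_one, Matrix.head_cons,
      Matrix.cons_val_zero, smul_eq_mul]; ring
  have hζ2 : ζ 2 = ξ 2 := by
    have : (![-g1, -g2, 0] : Fin 3 → ℝ) 2 = 0 := rfl
    simp only [hζ, Pi.add_apply, Pi.smul_apply, smul_eq_mul, this, mul_zero, add_zero]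
  set d : ℝ := δ ^ (α - 1) with hd
  have hd0 : 0 < d := Real.rpow_pos_of_pos hδ0 _
  have hd1 : d ≤ 1 := Real.rpow_le_one (le_of_lt hδ0) (le_of_lt hδ1) (by linarith)
  set s : ℝ := Real.sqrt ((ξ 0) ^ 2 + (ξ 1) ^ 2) with hs
  set Lg : ℝ := Real.sqrt (g1 ^ 2 + g2 ^ 2) with hLgdef
  set a : ℝ := Real.sqrt ((ζ 0) ^ 2 + (ζ 1) ^ 2) with ha
  set b : ℝ := |ξ 2| with hb
  have hs0 : 0 ≤ s := Real.sqrt_nonneg _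
  have hLg0 : 0 ≤ Lg := Real.sqrt_nonneg _
  have ha0 : 0 ≤ a := Real.sqrt_nonneg _
  have hb0 : 0 ≤ b := abs_nonneg _
  have hssq : s ^ 2 = (ξ 0) ^ 2 + (ξ 1) ^ 2 := Real.sq_sqrt (by positivity)
  have hLgsq : Lg ^ 2 = g1 ^ 2 + g2 ^ 2 := Real.sq_sqrt (by positivity)
  have hbsq : b ^ 2 = (ξ 2) ^ 2 := sq_abs _
  -- |t| ≤ d * b
  have htb : |t| ≤ d * b := by
    rw [ht, abs_mul, abs_of_pos hd0]
  -- Cauchy-Schwarz: |ξ0*g1 + ξ1*g2| ≤ s * Lg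
  have hCS : |ξ 0 * g1 + ξ 1 * g2| ≤ s * Lg := by
    have e : s ^ 2 * Lg ^ 2 = ((ξ 0) ^ 2 + (ξ 1) ^ 2) * (g1 ^ 2 + g2 ^ 2) := by
      rw [hssq, hLgsq]
    have h : (ξ 0 * g1 + ξ 1 * g2) ^ 2 ≤ (s * Lg) ^ 2 := by
      linarith [sq_nonneg (ξ 0 * g2 - ξ 1 * g1), e]
    calc |ξ 0 * g1 + ξ 1 * g2| = Real.sqrt ((ξ 0 * g1 + ξ 1 * g2) ^ 2) :=
          (Real.sqrt_sq_eq_abs _).symm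
      _ ≤ Real.sqrt ((s * Lg) ^ 2) := Real.sqrt_le_sqrt h
      _ = s * Lg := Real.sqrt_sq (mul_nonneg hs0 hLg0)
  -- a ≤ s + |t| * Lg
  have haub : a ≤ s + |t| * Lg := by
    rw [ha]
    have h2 : -(t * (ξ 0 * g1 + ξ 1 * g2)) ≤ |t| * (s * Lg) := by
      calc -(t * (ξ 0 * g1 + ξ 1 * g2)) ≤ |t * (ξ 0 * g1 + ξ 1 * g2)| := neg_le_abs _
        _ = |t| * |ξ 0 * g1 + ξ 1 * g2| := abs_mul _ _
        _ ≤ |t| * (s * Lg) := mul_le_mul_of_nonneg_left hCS (abs_nonneg _)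
    have e1 : t ^ 2 * Lg ^ 2 = t ^ 2 * g1 ^ 2 + t ^ 2 * g2 ^ 2 := by rw [hLgsq]; ring
    have e2 : |t| ^ 2 * Lg ^ 2 = t ^ 2 * Lg ^ 2 := by rw [sq_abs]
    have h1 : (ζ 0) ^ 2 + (ζ 1) ^ 2 ≤ (s + |t| * Lg) ^ 2 := by
      rw [hζ0, hζ1]
      linarith [h2, e1, e2, hssq]
    calc Real.sqrt ((ζ 0) ^ 2 + (ζ 1) ^ 2) ≤ Real.sqrt ((s + |t| * Lg) ^ 2) :=
          Real.sqrt_le_sqrt h1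
      _ = s + |t| * Lg := Real.sqrt_sq (by positivity)
  have hab : a ≤ s + d * b * Lg := by
    have := mul_le_mul_of_nonneg_right htb hLg0
    linarith
  -- upper bound from hypothesis
  have hmain : A₀.mulVec ζ ⬝ᵥ ζ ≤ Λ⁻¹ * (η * a * a + ν * (b * a + b * a + b * b)) := by
    have h := hupp ζ ζ
    rw [hζ2] at h
    calc A₀.mulVec ζ ⬝ᵥ ζ ≤ |A₀.mulVec ζ ⬝ᵥ ζ| := le_abs_self _
      _ ≤ _ := h
  have halg := aux_alg η ν s b a d Lg L K₀ hν hνη.le hs0 hb0 ha0 hLg0 hd0 hd1 hLg hK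
    hdη hab
  have hfinal : Λ⁻¹ * (η * a * a + ν * (b * a + b * a + b * b))
      ≤ Λ⁻¹ * (2 * L ^ 2 * (K₀ + 1) + 6) * (η * ((ξ 0) ^ 2 + (ξ 1) ^ 2) + ν * (ξ 2) ^ 2) := by
    rw [← hssq, ← hbsq]
    have h := mul_le_mul_of_nonneg_left halg hΛinv.le
    linarith [h]
  calc A₀.mulVec ζ ⬝ᵥ ζ ≤ _ := hmain
    _ ≤ _ := hfinal
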